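/- Let 𝓙 ⊆ 𝒫(V) be a nonempty antichain of nonempty subsets of V, let I ⊆ V be such that no J ∈ 𝓙 satisfies J ⊆ I, let B ∈ 𝒞_I, and let f : X → ℝ be bounded and measurable. Then ‖f·1_B‖_{U^{V,𝓙}} ≤ ‖f‖_{U^{V,𝓙}}. -/
import Mathlib

open MeasureTheory
open scoped Classical

noncomputable section

/-- Recombine `(x_{V∖J}, x_J^ω)` into a point of `X = ∏_v X_v`. -/
def recomb {V : Type} (X : V → Type) (J : Set V)
    (y : ∀ v : ↥(Jᶜ : Set V), X ↑v) (z : ∀ p : ↥J × Bool, X ↑p.1)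
    (ω : ↥J → Bool) : ∀ v, X v := fun v =>
  if h : v ∈ J then z (⟨v, h⟩, ω ⟨v, h⟩) else y ⟨v, h⟩

section Aux

variable {V : Type} [Fintype V] [DecidableEq V] (X : V → Type) [∀ v, MeasurableSpace (X v)]
  (J : Set V) (j : V)

/-- Point of the product space built from the off-`J` part `y`, the part `zq` of the doubled
coordinates away from `j`, a value `u` placed at coordinate `j`, and a pattern `σ`. -/
def ptfn (y : ∀ v : ↥(Jᶜ : Set V), X ↑v)
    (zq : ∀ q : {q : ↥J × Bool // ¬((q.1 : V) = j)}, X ↑(q : ↥J × Bool).1)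
    (u : X j) (σ : {i : ↥J // ¬((i : V) = j)} → Bool) : ∀ v, X v := fun v =>
  if hv : v ∈ J then
    if hj : v = j then cast (congrArg X hj).symm u
    else zq ⟨(⟨v, hv⟩, σ ⟨⟨v, hv⟩, hj⟩), hj⟩
  else y ⟨v, hv⟩

/-- Product over patterns. -/
def Afun (h : (∀ v, X v) → ℝ) (y : ∀ v : ↥(Jᶜ : Set V), X ↑v)
    (zq : ∀ q : {q : ↥J × Bool // ¬((q.1 : V) = j)}, X ↑(q : ↥J × Bool).1)
    (u : X j) : ℝ :=
  ∏ σ : {i : ↥J // ¬((i : V) = j)} → Bool, h (ptfn X J j y zq u σ)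

/-- Merge the two halves of the doubled coordinates. -/
def mrg (zp : ∀ q : {q : ↥J × Bool // (q.1 : V) = j}, X ↑(q : ↥J × Bool).1)
    (zq : ∀ q : {q : ↥J × Bool // ¬((q.1 : V) = j)}, X ↑(q : ↥J × Bool).1) :
    ∀ q : ↥J × Bool, X ↑q.1 := fun q =>
  if hq : (q.1 : V) = j then zp ⟨q, hq⟩ else zq ⟨q, hq⟩

variable (hjJ : j ∈ J)

/-- The splitting of cube patterns. -/
def Ebig : ({i : ↥J // ¬((i : V) = j)} → Bool) × Bool ≃ (↥J → Bool) where
  toFun p i := if hi : (i : V) = j then p.2 else p.1 ⟨i, hi⟩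
  invFun ω := (fun i => ω ↑i, ω ⟨j, hjJ⟩)
  left_inv := by
    rintro ⟨σ, b⟩
    refine Prod.ext (funext fun i => ?_) ?_
    · simp only
      rw [dif_neg i.2]
    · simp
  right_inv := by
    intro ω
    funext i
    by_cases hi : (i : V) = j
    · simp only
      rw [dif_pos hi]
      congr 1
      exact Subtype.ext hi.symm
    · simp only
      rw [dif_neg hi]

/-- `Fin 2` indexing of the two `j`-coordinates. -/
def ebF : Fin 2 ≃ {q : ↥J × Bool // (q.1 : V) = j} where
  toFun i := ⟨(⟨j, hjJ⟩, decide (i = 1)), rfl⟩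
  invFun q := if (q : ↥J × Bool).2 then 1 else 0
  left_inv i := by fin_cases i <;> rfl
  right_inv := by
    rintro ⟨⟨i, b⟩, hq⟩
    refine Subtype.ext (Prod.ext (Subtype.ext ?_) ?_)
    · exact hq.symm
    · cases b <;> rfl

lemma recomb_mrg_eq (y : ∀ v : ↥(Jᶜ : Set V), X ↑v)
    (zp : ∀ q : {q : ↥J × Bool // (q.1 : V) = j}, X ↑(q : ↥J × Bool).1)
    (zq : ∀ q : {q : ↥J × Bool // ¬((q.1 : V) = j)}, X ↑(q : ↥J × Bool).1)
    (b : Bool) (σ : {i : ↥J // ¬((i : V) = j)} → Bool) :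
    recomb X J y (mrg X J j zp zq) (Ebig J j hjJ (σ, b)) =
      ptfn X J j y zq (zp ⟨(⟨j, hjJ⟩, b), rfl⟩) σ := by
  funext v
  simp only [recomb, ptfn, Ebig, Equiv.coe_fn_mk, mrg]
  by_cases hv : v ∈ J
  · rw [dif_pos hv, dif_pos hv]
    by_cases hvj : v = j
    · subst hvj
      rw [dif_pos rfl, dif_pos rfl, dif_pos rfl]
      rfl
    · rw [dif_neg hvj, dif_neg hvj, dif_neg hvj]
  · rw [dif_neg hv, dif_neg hv]

end Aux

set_option linter.unusedSectionVars false

section Aux2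

variable {V : Type} [Fintype V] [DecidableEq V] (X : V → Type) [∀ v, MeasurableSpace (X v)]
  (J : Set V) (j : V)

lemma measurable_recomb_pair (ω : ↥J → Bool) :
    Measurable fun x : (∀ v : ↥(Jᶜ : Set V), X ↑v) × (∀ q : ↥J × Bool, X ↑q.1) =>
      recomb X J x.1 x.2 ω := by
  apply measurable_pi_lambda
  intro v
  simp only [recomb]
  by_cases hv : v ∈ J
  · simp only [dif_pos hv]
    exact (measurable_pi_apply _).comp measurable_snd
  · simp only [dif_neg hv]
    exact (measurable_pi_apply _).comp measurable_fst

lemma measurable_ptfn (σ : {i : ↥J // ¬((i : V) = j)} → Bool) :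
    Measurable fun x :
        ((∀ v : ↥(Jᶜ : Set V), X ↑v) ×
          (∀ q : {q : ↥J × Bool // ¬((q.1 : V) = j)}, X ↑(q : ↥J × Bool).1)) × X j =>
      ptfn X J j x.1.1 x.1.2 x.2 σ := by
  apply measurable_pi_lambda
  intro v
  simp only [ptfn]
  by_cases hv : v ∈ J
  · simp only [dif_pos hv]
    by_cases hvj : v = j
    · subst hvj
      simp only [dif_pos]
      exact measurable_snd
    · simp only [dif_neg hvj]
      exact (measurable_pi_apply _).comp measurable_fst.snd
  · simp only [dif_neg hv]
    exact (measurable_pi_apply _).comp measurable_fst.fst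

lemma abs_prod_le_pow {ι : Type*} (s : Finset ι) (f : ι → ℝ) (C : ℝ) (hC : 0 ≤ C)
    (hb : ∀ i, |f i| ≤ C) : |∏ i ∈ s, f i| ≤ C ^ s.card := by
  rw [Finset.abs_prod]
  calc ∏ i ∈ s, |f i| ≤ ∏ _i ∈ s, C :=
        Finset.prod_le_prod (fun i _ => abs_nonneg _) (fun i _ => hb i)
    _ = C ^ s.card := Finset.prod_const C

lemma integrable_of_bdd {α : Type*} [MeasurableSpace α] {ν : Measure α} [IsFiniteMeasure ν]
    {f : α → ℝ} {C : ℝ} (hm : Measurable f) (hb : ∀ x, |f x| ≤ C) : Integrable f ν :=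
  ⟨hm.aestronglyMeasurable,
    HasFiniteIntegral.of_bounded (C := C) (ae_of_all _ fun x => by
      simpa [Real.norm_eq_abs] using hb x)⟩

lemma abs_integral_le {α : Type*} [MeasurableSpace α] (ν : Measure α) [IsProbabilityMeasure ν]
    {f : α → ℝ} {C : ℝ} (hb : ∀ x, |f x| ≤ C) : |∫ x, f x ∂ν| ≤ C := by
  have h := norm_integral_le_of_norm_le_const (μ := ν) (f := f) (C := C)
    (ae_of_all _ fun x => by simpa [Real.norm_eq_abs] using hb x)
  simpa [Real.norm_eq_abs, measure_univ] using h

lemma nonempty_of_prob {α : Type*} [MeasurableSpace α] (ν : Measure α)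
    [IsProbabilityMeasure ν] : Nonempty α := by
  by_contra hne
  rw [not_nonempty_iff] at hne
  have h1 : ν Set.univ = 1 := measure_univ
  rw [Set.univ_eq_empty_iff.mpr hne] at h1
  simp at h1

end Aux2

/-- The integral `∫_{X⁺_J} ∏_{ω ∈ {0,1}^J} f(x_{V∖J}, x_J^ω) dμ⁺_J`. -/
def UJint {V : Type} [Fintype V] [DecidableEq V] (X : V → Type)
    [∀ v, MeasurableSpace (X v)] (μ : ∀ v, Measure (X v)) (J : Set V)
    (f : (∀ v, X v) → ℝ) : ℝ :=
  ∫ p : (∀ v : ↥(Jᶜ : Set V), X ↑v) × (∀ q : ↥J × Bool, X ↑q.1),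
    ∏ ω : ↥J → Bool, f (recomb X J p.1 p.2 ω)
    ∂((Measure.pi fun v : ↥(Jᶜ : Set V) => μ ↑v).prod
      (Measure.pi fun q : ↥J × Bool => μ ↑q.1))

section Main

variable {V : Type} [Fintype V] [DecidableEq V] (X : V → Type) [∀ v, MeasurableSpace (X v)]
  (μ : ∀ v, Measure (X v)) [∀ v, IsProbabilityMeasure (μ v)] (J : Set V) (j : V)

lemma UJint_eq_sq (hjJ : j ∈ J) (h : (∀ v, X v) → ℝ) (C : ℝ) (hC : 0 ≤ C)
    (hb : ∀ x, |h x| ≤ C) (hm : Measurable h) :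
    UJint X μ J h =
      ∫ m : (∀ v : ↥(Jᶜ : Set V), X ↑v) ×
            (∀ q : {q : ↥J × Bool // ¬((q.1 : V) = j)}, X ↑(q : ↥J × Bool).1),
        (∫ u, Afun X J j h m.1 m.2 u ∂(μ j)) ^ 2
        ∂((Measure.pi fun v : ↥(Jᶜ : Set V) => μ ↑v).prod
          (Measure.pi fun q : {q : ↥J × Bool // ¬((q.1 : V) = j)} =>
            μ ↑(q : ↥J × Bool).1)) := by
  -- notation
  set e1 := MeasurableEquiv.piEquivPiSubtypeProd (fun q : ↥J × Bool => X ↑q.1)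
    (fun q : ↥J × Bool => (q.1 : V) = j) with he1
  have hp1 := measurePreserving_piEquivPiSubtypeProd
    (fun q : ↥J × Bool => μ ↑q.1) (fun q : ↥J × Bool => (q.1 : V) = j)
  -- integrand measurability / boundedness
  have hΦm : Measurable fun x : (∀ v : ↥(Jᶜ : Set V), X ↑v) × (∀ q : ↥J × Bool, X ↑q.1) =>
      ∏ ω : ↥J → Bool, h (recomb X J x.1 x.2 ω) :=
    Finset.measurable_prod _ fun ω _ => hm.comp (measurable_recomb_pair X J ω)
  have hΦb : ∀ x : (∀ v : ↥(Jᶜ : Set V), X ↑v) × (∀ q : ↥J × Bool, X ↑q.1),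
      |∏ ω : ↥J → Bool, h (recomb X J x.1 x.2 ω)| ≤
        C ^ (Finset.univ : Finset (↥J → Bool)).card :=
    fun x => abs_prod_le_pow _ _ C hC fun ω => hb _
  -- Afun measurability / boundedness
  have hAm : Measurable fun p :
      ((∀ v : ↥(Jᶜ : Set V), X ↑v) ×
        (∀ q : {q : ↥J × Bool // ¬((q.1 : V) = j)}, X ↑(q : ↥J × Bool).1)) × X j =>
      Afun X J j h p.1.1 p.1.2 p.2 :=
    Finset.measurable_prod _ fun σ _ => hm.comp (measurable_ptfn X J j σ)
  have hAb : ∀ y zq u, |Afun X J j h y zq u| ≤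
      C ^ (Finset.univ : Finset ({i : ↥J // ¬((i : V) = j)} → Bool)).card :=
    fun y zq u => abs_prod_le_pow _ _ C hC fun σ => hb _
  have hGm : Measurable fun m :
      (∀ v : ↥(Jᶜ : Set V), X ↑v) ×
        (∀ q : {q : ↥J × Bool // ¬((q.1 : V) = j)}, X ↑(q : ↥J × Bool).1) =>
      (∫ u, Afun X J j h m.1 m.2 u ∂(μ j)) ^ 2 :=
    (hAm.stronglyMeasurable.integral_prod_right'.measurable).pow_const 2
  have hGb : ∀ m :
      (∀ v : ↥(Jᶜ : Set V), X ↑v) ×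
        (∀ q : {q : ↥J × Bool // ¬((q.1 : V) = j)}, X ↑(q : ↥J × Bool).1),
      |(∫ u, Afun X J j h m.1 m.2 u ∂(μ j)) ^ 2| ≤
        (C ^ (Finset.univ : Finset ({i : ↥J // ¬((i : V) = j)} → Bool)).card) ^ 2 := by
    intro m
    rw [abs_pow]
    exact pow_le_pow_left₀ (abs_nonneg _) (abs_integral_le (μ j) (hAb m.1 m.2)) 2
  -- step 1 : Fubini in y
  unfold UJint
  rw [integral_prod _ (integrable_of_bdd hΦm hΦb)]
  have step2 : ∀ y : ∀ v : ↥(Jᶜ : Set V), X ↑v,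
      (∫ z, ∏ ω : ↥J → Bool, h (recomb X J y z ω)
        ∂(Measure.pi fun q : ↥J × Bool => μ ↑q.1)) =
      ∫ zq, (∫ u, Afun X J j h y zq u ∂(μ j)) ^ 2
        ∂(Measure.pi fun q : {q : ↥J × Bool // ¬((q.1 : V) = j)} =>
            μ ↑(q : ↥J × Bool).1) := by
    intro y
    rw [← (hp1.symm _).integral_comp e1.symm.measurableEmbedding
      (fun z => ∏ ω : ↥J → Bool, h (recomb X J y z ω))]
    have hint2 : Integrable (fun pz :
        (∀ q : {q : ↥J × Bool // (q.1 : V) = j}, X ↑(q : ↥J × Bool).1) ×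
        (∀ q : {q : ↥J × Bool // ¬((q.1 : V) = j)}, X ↑(q : ↥J × Bool).1) =>
          ∏ ω : ↥J → Bool, h (recomb X J y (e1.symm pz) ω))
        ((Measure.pi fun q : {q : ↥J × Bool // (q.1 : V) = j} =>
            μ ↑(q : ↥J × Bool).1).prod
         (Measure.pi fun q : {q : ↥J × Bool // ¬((q.1 : V) = j)} =>
            μ ↑(q : ↥J × Bool).1)) :=
      integrable_of_bdd
        (Finset.measurable_prod _ fun ω _ => hm.comp ((measurable_recomb_pair X J ω).comp
          (measurable_const.prodMk e1.symm.measurable)))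
        (fun pz => abs_prod_le_pow _ _ C hC fun ω => hb _)
    rw [integral_prod_symm _ hint2]
    congr 1
    funext zq
    -- pointwise reduction of the inner integral
    have claim1 : ∀ zp, (∏ ω : ↥J → Bool, h (recomb X J y (e1.symm (zp, zq)) ω)) =
        Afun X J j h y zq (zp (ebF J j hjJ 1)) * Afun X J j h y zq (zp (ebF J j hjJ 0)) := by
      intro zp
      have hmrg : e1.symm (zp, zq) = mrg X J j zp zq := rfl
      rw [hmrg, ← Equiv.prod_comp (Ebig J j hjJ)
        (fun ω => h (recomb X J y (mrg X J j zp zq) ω)), Fintype.prod_prod_type]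
      simp only [Fintype.prod_bool]
      rw [Finset.prod_mul_distrib]
      congr 1
      · exact Finset.prod_congr rfl fun σ _ =>
          congrArg h (recomb_mrg_eq X J j hjJ y zp zq true σ)
      · exact Finset.prod_congr rfl fun σ _ =>
          congrArg h (recomb_mrg_eq X J j hjJ y zp zq false σ)
    simp only [claim1]
    -- compute the inner integral
    have hpc := measurePreserving_piCongrLeft
      (fun q : {q : ↥J × Bool // (q.1 : V) = j} => μ ↑(q : ↥J × Bool).1) (ebF J j hjJ)
    rw [← hpc.integral_comp (MeasurableEquiv.piCongrLeft
      (fun q : {q : ↥J × Bool // (q.1 : V) = j} => X ↑(q : ↥J × Bool).1)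
      (ebF J j hjJ)).measurableEmbedding]
    simp only [MeasurableEquiv.piCongrLeft_apply_apply]
    have hp2 := measurePreserving_piFinTwo (fun _ : Fin 2 => μ j)
    have key2 : (∫ w : Fin 2 → X j, Afun X J j h y zq (w 1) * Afun X J j h y zq (w 0)
        ∂(Measure.pi fun _ : Fin 2 => μ j)) = (∫ u, Afun X J j h y zq u ∂(μ j)) ^ 2 := by
      rw [← (hp2.symm _).integral_comp (MeasurableEquiv.piFinTwo
        (fun _ : Fin 2 => X j)).symm.measurableEmbedding
        (fun w => Afun X J j h y zq (w 1) * Afun X J j h y zq (w 0))]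
      have hv1 : ∀ st : X j × X j,
          (MeasurableEquiv.piFinTwo (fun _ : Fin 2 => X j)).symm st 1 = st.2 := fun _ => rfl
      have hv0 : ∀ st : X j × X j,
          (MeasurableEquiv.piFinTwo (fun _ : Fin 2 => X j)).symm st 0 = st.1 := fun _ => rfl
      simp only [hv1, hv0]
      have hcomm : ∀ st : X j × X j, Afun X J j h y zq st.2 * Afun X J j h y zq st.1 =
          Afun X J j h y zq st.1 * Afun X J j h y zq st.2 := fun _ => mul_comm _ _
      simp only [hcomm]
      rw [integral_prod_mul (μ := μ j) (ν := μ j)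
        (f := fun u => Afun X J j h y zq u) (g := fun u => Afun X J j h y zq u), sq]
    exact key2
  simp only [step2]
  exact (integral_prod _ (integrable_of_bdd hGm hGb)).symm

end Main

/-- The seminorm `‖f‖_{U^{V,J}} = (UJint f)^{1/2^{|J|}}`. -/
def UJnorm {V : Type} [Fintype V] [DecidableEq V] (X : V → Type)
    [∀ v, MeasurableSpace (X v)] (μ : ∀ v, Measure (X v)) (J : Set V)
    (f : (∀ v, X v) → ℝ) : ℝ :=
  (UJint X μ J f) ^ ((1 : ℝ) / 2 ^ J.ncard)

/-- The σ-algebra `𝒞_I` on `X = ∏_v X_v` of sets depending only on the coordinates in `I`. -/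
def cylAlg {V : Type} (X : V → Type) [∀ v, MeasurableSpace (X v)] (I : Set V) :
    MeasurableSpace (∀ v, X v) :=
  MeasurableSpace.comap (fun (x : ∀ v, X v) (i : ↥I) => x ↑i) MeasurableSpace.pi

section Main2

variable {V : Type} [Fintype V] [DecidableEq V] (X : V → Type) [∀ v, MeasurableSpace (X v)]
  (μ : ∀ v, Measure (X v)) [∀ v, IsProbabilityMeasure (μ v)] (J : Set V) (j : V)

lemma UJint_nonneg (hjJ : j ∈ J) (h : (∀ v, X v) → ℝ) (C : ℝ) (hC : 0 ≤ C)
    (hb : ∀ x, |h x| ≤ C) (hm : Measurable h) : 0 ≤ UJint X μ J h := by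
  rw [UJint_eq_sq X μ J j hjJ h C hC hb hm]
  exact integral_nonneg fun m => sq_nonneg _

lemma UJint_indicator_le (hjJ : j ∈ J) (I : Set V) (hjI : j ∉ I)
    (B : Set (∀ v, X v)) (hB : MeasurableSet[cylAlg X I] B)
    (g : (∀ v, X v) → ℝ) (C : ℝ) (hC : 0 ≤ C) (hb : ∀ x, |g x| ≤ C) (hm : Measurable g) :
    UJint X μ J (B.indicator g) ≤ UJint X μ J g := by
  obtain ⟨S, hSm, hBS⟩ := hB
  have hproj : Measurable fun (x : ∀ v, X v) (i : ↥I) => x ↑i :=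
    measurable_pi_lambda _ fun i => measurable_pi_apply (↑i : V)
  have hBmeas : MeasurableSet B := hBS ▸ hproj hSm
  have hbInd : ∀ x, |B.indicator g x| ≤ C := by
    intro x
    by_cases hx : x ∈ B
    · rw [Set.indicator_of_mem hx]; exact hb x
    · rw [Set.indicator_of_notMem hx]; simpa using hC
  have hmInd : Measurable (B.indicator g) := hm.indicator hBmeas
  rw [UJint_eq_sq X μ J j hjJ (B.indicator g) C hC hbInd hmInd,
    UJint_eq_sq X μ J j hjJ g C hC hb hm]
  have hAm1 : Measurable fun p :
      ((∀ v : ↥(Jᶜ : Set V), X ↑v) ×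
        (∀ q : {q : ↥J × Bool // ¬((q.1 : V) = j)}, X ↑(q : ↥J × Bool).1)) × X j =>
      Afun X J j (B.indicator g) p.1.1 p.1.2 p.2 :=
    Finset.measurable_prod _ fun σ _ => hmInd.comp (measurable_ptfn X J j σ)
  have hAm2 : Measurable fun p :
      ((∀ v : ↥(Jᶜ : Set V), X ↑v) ×
        (∀ q : {q : ↥J × Bool // ¬((q.1 : V) = j)}, X ↑(q : ↥J × Bool).1)) × X j =>
      Afun X J j g p.1.1 p.1.2 p.2 :=
    Finset.measurable_prod _ fun σ _ => hm.comp (measurable_ptfn X J j σ)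
  set D := C ^ (Finset.univ : Finset ({i : ↥J // ¬((i : V) = j)} → Bool)).card with hD
  have hAb1 : ∀ y zq u, |Afun X J j (B.indicator g) y zq u| ≤ D :=
    fun y zq u => abs_prod_le_pow _ _ C hC fun σ => hbInd _
  have hAb2 : ∀ y zq u, |Afun X J j g y zq u| ≤ D :=
    fun y zq u => abs_prod_le_pow _ _ C hC fun σ => hb _
  apply integral_mono
  · exact integrable_of_bdd
      ((hAm1.stronglyMeasurable.integral_prod_right'.measurable).pow_const 2)
      (fun m => by
        rw [abs_pow]
        exact pow_le_pow_left₀ (abs_nonneg _) (abs_integral_le (μ j) (hAb1 m.1 m.2)) 2)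
  · exact integrable_of_bdd
      ((hAm2.stronglyMeasurable.integral_prod_right'.measurable).pow_const 2)
      (fun m => by
        rw [abs_pow]
        exact pow_le_pow_left₀ (abs_nonneg _) (abs_integral_le (μ j) (hAb2 m.1 m.2)) 2)
  · intro m
    haveI : Nonempty (X j) := nonempty_of_prob (μ j)
    set u₀ := Classical.arbitrary (X j) with hu0
    have hInd : ∀ (u : X j) σ,
        ptfn X J j m.1 m.2 u σ ∈ B ↔ ptfn X J j m.1 m.2 u₀ σ ∈ B := by
      intro u σ
      rw [← hBS]
      simp only [Set.mem_preimage]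
      have hptagree : (fun i : ↥I => ptfn X J j m.1 m.2 u σ ↑i) =
          fun i : ↥I => ptfn X J j m.1 m.2 u₀ σ ↑i := by
        funext i
        have hij : ¬((↑i : V) = j) := fun hcon => hjI (hcon ▸ i.2)
        simp only [ptfn]
        by_cases hv : (↑i : V) ∈ J
        · rw [dif_pos hv, dif_pos hv, dif_neg hij, dif_neg hij]
        · rw [dif_neg hv, dif_neg hv]
      rw [hptagree]
    set c : ℝ := ∏ σ : {i : ↥J // ¬((i : V) = j)} → Bool,
      (if ptfn X J j m.1 m.2 u₀ σ ∈ B then (1 : ℝ) else 0) with hc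
    have hc0 : 0 ≤ c := Finset.prod_nonneg fun σ _ => by split <;> norm_num
    have hc1 : c ≤ 1 :=
      Finset.prod_le_one (fun σ _ => by split <;> norm_num)
        (fun σ _ => by split <;> norm_num)
    have hAeq : ∀ u : X j, Afun X J j (B.indicator g) m.1 m.2 u =
        c * Afun X J j g m.1 m.2 u := by
      intro u
      rw [hc]
      simp only [Afun]
      rw [← Finset.prod_mul_distrib]
      apply Finset.prod_congr rfl
      intro σ _
      rw [Set.indicator_apply]
      by_cases hmem : ptfn X J j m.1 m.2 u σ ∈ B
      · rw [if_pos hmem, if_pos ((hInd u σ).mp hmem), one_mul]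
      · rw [if_neg hmem, if_neg (fun hcon => hmem ((hInd u σ).mpr hcon)), zero_mul]
    simp only [hAeq]
    rw [integral_const_mul]
    have hT := sq_nonneg (∫ u, Afun X J j g m.1 m.2 u ∂(μ j))
    rw [mul_pow]
    have hcsq : c ^ 2 ≤ 1 := by nlinarith
    calc c ^ 2 * (∫ u, Afun X J j g m.1 m.2 u ∂(μ j)) ^ 2
        ≤ 1 * (∫ u, Afun X J j g m.1 m.2 u ∂(μ j)) ^ 2 :=
          mul_le_mul_of_nonneg_right hcsq hT
      _ = _ := one_mul _

lemma UJnorm_nonneg (hJne : J.Nonempty) (h : (∀ v, X v) → ℝ) (C : ℝ) (hC : 0 ≤ C)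
    (hb : ∀ x, |h x| ≤ C) (hm : Measurable h) : 0 ≤ UJnorm X μ J h := by
  obtain ⟨j, hjJ⟩ := hJne
  exact Real.rpow_nonneg (UJint_nonneg X μ J j hjJ h C hC hb hm) _

lemma UJnorm_indicator_le (hjJ : j ∈ J) (I : Set V) (hjI : j ∉ I)
    (B : Set (∀ v, X v)) (hB : MeasurableSet[cylAlg X I] B)
    (g : (∀ v, X v) → ℝ) (C : ℝ) (hC : 0 ≤ C) (hb : ∀ x, |g x| ≤ C) (hm : Measurable g) :
    UJnorm X μ J (B.indicator g) ≤ UJnorm X μ J g := by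
  have hbInd : ∀ x, |B.indicator g x| ≤ C := by
    intro x
    by_cases hx : x ∈ B
    · rw [Set.indicator_of_mem hx]; exact hb x
    · rw [Set.indicator_of_notMem hx]; simpa using hC
  have hBmeas : MeasurableSet B := by
    obtain ⟨S, hSm, hBS⟩ := hB
    have hproj : Measurable fun (x : ∀ v, X v) (i : ↥I) => x ↑i :=
      measurable_pi_lambda _ fun i => measurable_pi_apply (↑i : V)
    exact hBS ▸ hproj hSm
  exact Real.rpow_le_rpow (UJint_nonneg X μ J j hjJ (B.indicator g) C hC hbInd
      (hm.indicator hBmeas))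
    (UJint_indicator_le X μ J j hjJ I hjI B hB g C hC hb hm) (by positivity)

end Main2

/-- The seminorm `‖f‖_{U^{V,𝓙}}`, an infimum over decompositions `f = Σ_i f_i` into
bounded measurable pieces. -/
def UFamNorm {V : Type} [Fintype V] [DecidableEq V] (X : V → Type)
    [∀ v, MeasurableSpace (X v)] (μ : ∀ v, Measure (X v)) (𝓙 : Finset (Set V))
    (f : (∀ v, X v) → ℝ) : ℝ :=
  sInf {r : ℝ | ∃ (m : ℕ) (g : ℕ → (∀ v, X v) → ℝ),
    (∀ i, (∃ C, ∀ x, |g i x| ≤ C) ∧ Measurable (g i)) ∧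
    (∀ x, f x = ∑ i ∈ Finset.range (m + 1), g i x) ∧
    r = ∑ i ∈ Finset.range (m + 1),
        (∏ J ∈ 𝓙, UJnorm X μ J (g i) ^ (2 ^ J.ncard)) ^
          ((1 : ℝ) / ∑ J ∈ 𝓙, (2 : ℝ) ^ J.ncard)}

set_option maxHeartbeats 1000000 in
/-- If no `J ∈ 𝓙` is contained in `I` and `B ∈ 𝒞_I`, then
`‖f·1_B‖_{U^{V,𝓙}} ≤ ‖f‖_{U^{V,𝓙}}`. -/
theorem UFamNorm_indicator_le (V : Type) [Fintype V] [DecidableEq V] [Nonempty V]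
    (X : V → Type) [∀ v, MeasurableSpace (X v)]
    (μ : ∀ v, Measure (X v)) [∀ v, IsProbabilityMeasure (μ v)]
    (𝓙 : Finset (Set V)) (h𝓙 : 𝓙.Nonempty)
    (h𝓙ne : ∀ J ∈ 𝓙, J.Nonempty)
    (h𝓙anti : ∀ J ∈ 𝓙, ∀ J' ∈ 𝓙, J ⊆ J' → J = J')
    (I : Set V) (hI : ∀ J ∈ 𝓙, ¬ J ⊆ I)
    (B : Set (∀ v, X v)) (hB : MeasurableSet[cylAlg X I] B)
    (f : (∀ v, X v) → ℝ) (hfb : ∃ C, ∀ x, |f x| ≤ C) (hfm : Measurable f) :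
    UFamNorm X μ 𝓙 (B.indicator f) ≤ UFamNorm X μ 𝓙 f := by
  have hBmeas : MeasurableSet B := by
    obtain ⟨S, hSm, hBS⟩ := hB
    have hproj : Measurable fun (x : ∀ v, X v) (i : ↥I) => x ↑i :=
      measurable_pi_lambda _ fun i => measurable_pi_apply (↑i : V)
    exact hBS ▸ hproj hSm
  unfold UFamNorm
  apply le_csInf
  · exact ⟨_, ⟨0, fun _ => f, fun _ => ⟨hfb, hfm⟩, fun x => by simp, rfl⟩⟩
  · rintro r ⟨m, g, hg, hsum, rfl⟩
    have hCex : ∀ i : ℕ, ∃ C : ℝ, 0 ≤ C ∧ (∀ x, |g i x| ≤ C) ∧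
        (∀ x, |B.indicator (g i) x| ≤ C) := by
      intro i
      obtain ⟨Ci, hCi⟩ := (hg i).1
      refine ⟨max Ci 0, le_max_right _ _, fun x => le_trans (hCi x) (le_max_left _ _),
        fun x => ?_⟩
      by_cases hx : x ∈ B
      · rw [Set.indicator_of_mem hx]; exact le_trans (hCi x) (le_max_left _ _)
      · rw [Set.indicator_of_notMem hx]; simpa using le_max_right Ci 0
    apply csInf_le_of_le
    · -- bounded below by 0
      refine ⟨0, ?_⟩
      rintro s ⟨m', g', hg', hsum', rfl⟩
      apply Finset.sum_nonneg
      intro i _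
      apply Real.rpow_nonneg
      apply Finset.prod_nonneg
      intro J hJ
      obtain ⟨Ci, hCi⟩ := (hg' i).1
      exact pow_nonneg (UJnorm_nonneg X μ J (h𝓙ne J hJ) (g' i) (max Ci 0)
        (le_max_right _ _) (fun x => le_trans (hCi x) (le_max_left _ _)) (hg' i).2) _
    · -- membership
      refine ⟨m, fun i => B.indicator (g i), fun i => ⟨?_, (hg i).2.indicator hBmeas⟩, ?_, rfl⟩
      · obtain ⟨Ci, _, _, hCi⟩ := hCex i
        exact ⟨Ci, hCi⟩
      · intro x
        by_cases hx : x ∈ B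
        · simp only [Set.indicator_of_mem hx]
          exact hsum x
        · simp only [Set.indicator_of_notMem hx]
          simp
    · -- comparison of the two sums
      apply Finset.sum_le_sum
      intro i _
      obtain ⟨Ci, hCi0, hgb, hbInd⟩ := hCex i
      have hfac : ∀ J ∈ 𝓙, 0 ≤ UJnorm X μ J (B.indicator (g i)) ^ (2 ^ J.ncard) := by
        intro J hJ
        exact pow_nonneg (UJnorm_nonneg X μ J (h𝓙ne J hJ) _ Ci hCi0 hbInd
          ((hg i).2.indicator hBmeas)) _
      apply Real.rpow_le_rpow
      · exact Finset.prod_nonneg hfac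
      · apply Finset.prod_le_prod hfac
        intro J hJ
        obtain ⟨j, hjJ, hjI⟩ := Set.not_subset.mp (hI J hJ)
        exact pow_le_pow_left₀
          (UJnorm_nonneg X μ J (h𝓙ne J hJ) _ Ci hCi0 hbInd ((hg i).2.indicator hBmeas))
          (UJnorm_indicator_le X μ J j hjJ I hjI B hB (g i) Ci hCi0 hgb (hg i).2) _
      · positivity

end
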